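/- Let {𝒮_j}_{j=1}^q be an orthogonal (Σ_t)_{t∈T}-decorrelating partition, let 𝒮^inv be the direct sum of those 𝒮_j that are opt-invariant on T, and let β^inv be the unique maximizer over 𝒮^inv of the averaged explained variance β ↦ (1/n)∑_{t∈T} ΔVar_t(β). Then for every t ∈ T one has β^inv = Π_{𝒮^inv} γ_t; in particular β^inv = Π_{𝒮^inv} γ̄ where γ̄ := (1/n)∑_{t∈T} γ_t. -/

import Mathlib

open Matrix Finset MeasureTheory

noncomputable section

/-- Vectors in `ℝ^p`. -/
abbrev Vec (p : ℕ) : Type := Fin p → ℝ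

/-- Real `p × p` matrices. -/
abbrev Mat (p : ℕ) : Type := Matrix (Fin p) (Fin p) ℝ

/-- Explained variance `ΔVar(β) = 2 γᵀ C β − βᵀ C β` at a time with covariance `C`
and true parameter `γ`. -/
def dVar {p : ℕ} (C : Mat p) (γ β : Vec p) : ℝ :=
  2 * (γ ⬝ᵥ (C *ᵥ β)) - β ⬝ᵥ (C *ᵥ β)

/-- `β₀` is the unique maximizer of `f` over the linear subspace whose orthogonal
projection matrix is `P` (membership in the subspace is expressed as `P *ᵥ β = β`). -/
def IsUMaxOn {p : ℕ} (f : Vec p → ℝ) (P : Mat p) (β₀ : Vec p) : Prop :=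
  P *ᵥ β₀ = β₀ ∧ ∀ β : Vec p, P *ᵥ β = β → β ≠ β₀ → f β < f β₀

/-- The matrices `P j` are the orthogonal projection matrices of a family of pairwise
orthogonal nonzero linear subspaces of `ℝ^p` whose direct sum is `ℝ^p`. -/
structure OrthPartition (p q : ℕ) (P : Fin q → Mat p) : Prop where
  symm : ∀ j, (P j)ᵀ = P j
  idem : ∀ j, P j * P j = P j
  nonzero : ∀ j, P j ≠ 0
  orth : ∀ i j, i ≠ j → P i * P j = 0
  sum_one : ∑ j, P j = 1

/-- The subspace with orthogonal projection `Q` is opt-invariant on `{1,…,n}`: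
the unique maximizer of `ΔVar_t` over it is the same for all `t`. -/
def OptInv {p n : ℕ} (Cov : Fin n → Mat p) (γ : Fin n → Vec p) (Q : Mat p) : Prop :=
  ∃ β₀ : Vec p, ∀ t : Fin n, IsUMaxOn (dVar (Cov t) (γ t)) Q β₀

open scoped Classical in
/-- Orthogonal projection onto `𝒮^inv`, the direct sum of the opt-invariant subspaces
of the partition. -/
noncomputable def invProj {p n q : ℕ} (Cov : Fin n → Mat p) (γ : Fin n → Vec p)
    (P : Fin q → Mat p) : Mat p :=
  ∑ j ∈ Finset.univ.filter (fun j => OptInv Cov γ (P j)), P j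

open scoped Classical in
/-- Orthogonal projection onto `𝒮^res`, the direct sum of the non-opt-invariant
subspaces of the partition. -/
noncomputable def resProj {p n q : ℕ} (Cov : Fin n → Mat p) (γ : Fin n → Vec p)
    (P : Fin q → Mat p) : Mat p :=
  ∑ j ∈ Finset.univ.filter (fun j => ¬ OptInv Cov γ (P j)), P j

lemma uMax_unique {p : ℕ} {f : Vec p → ℝ} {Q : Mat p} {a b : Vec p}
    (ha : IsUMaxOn f Q a) (hb : IsUMaxOn f Q b) : a = b := by
  by_contra h
  have h1 := ha.2 b hb.1 (fun hh => h hh.symm)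
  have h2 := hb.2 a ha.1 h
  linarith

lemma dot_symm {p : ℕ} {C : Mat p} (hCs : Cᵀ = C) (x y : Vec p) :
    x ⬝ᵥ C *ᵥ y = y ⬝ᵥ C *ᵥ x := by
  rw [dotProduct_mulVec, ← mulVec_transpose, hCs, dotProduct_comm]

lemma proj_dot {p : ℕ} {C Q : Mat p} (hQs : Qᵀ = Q)
    (hcomm : Q * C = C * Q) (γ β : Vec p) (hβ : Q *ᵥ β = β) :
    γ ⬝ᵥ C *ᵥ β = (Q *ᵥ γ) ⬝ᵥ C *ᵥ β := by
  conv_lhs => rw [← hβ, mulVec_mulVec, ← hcomm, ← mulVec_mulVec]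
  rw [dotProduct_mulVec γ Q, ← mulVec_transpose, hQs]

lemma maxOn_proj {p : ℕ} {C Q : Mat p} (hC : C.PosDef)
    (hQs : Qᵀ = Q) (hQi : Q * Q = Q) (hcomm : Q * C = C * Q) (γ : Vec p) :
    IsUMaxOn (dVar C γ) Q (Q *ᵥ γ) := by
  have hCs : Cᵀ = C := hC.1
  refine ⟨by rw [mulVec_mulVec, hQi], fun β hm hne => ?_⟩
  set g := Q *ᵥ γ with hg
  have hgm : Q *ᵥ g = g := by rw [hg, mulVec_mulVec, hQi]
  have h1 : γ ⬝ᵥ C *ᵥ β = g ⬝ᵥ C *ᵥ β := proj_dot hQs hcomm γ β hm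
  have h2 : γ ⬝ᵥ C *ᵥ g = g ⬝ᵥ C *ᵥ g := proj_dot hQs hcomm γ g hgm
  have hpos : 0 < (β - g) ⬝ᵥ C *ᵥ (β - g) := by
    have := hC.dotProduct_mulVec_pos (x := β - g) (sub_ne_zero.mpr hne)
    simpa using this
  have hsymm : g ⬝ᵥ C *ᵥ β = β ⬝ᵥ C *ᵥ g := dot_symm hCs g β
  have hexp : (β - g) ⬝ᵥ C *ᵥ (β - g)
      = β ⬝ᵥ C *ᵥ β - g ⬝ᵥ C *ᵥ β - (β ⬝ᵥ C *ᵥ g - g ⬝ᵥ C *ᵥ g) := by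
    rw [mulVec_sub, dotProduct_sub, sub_dotProduct, sub_dotProduct]
  simp only [dVar, h1, h2]
  nlinarith [hpos, hexp, hsymm]


lemma sum_mulVec' {p : ℕ} {ι : Type*} [DecidableEq ι] (s : Finset ι) (M : ι → Mat p) (v : Vec p) :
    (∑ j ∈ s, M j) *ᵥ v = ∑ j ∈ s, M j *ᵥ v := by
  induction s using Finset.induction with
  | empty => simp
  | insert _ _ h ih => simp [Finset.sum_insert h, Matrix.add_mulVec, ih]

/-- Proposition 2 (i) of the paper: the unique maximizer `β^inv` of
the averaged explained variance over `𝒮^inv` satisfies `β^inv = Π_{𝒮^inv} γ_t` for all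
`t`, and in particular `β^inv = Π_{𝒮^inv} γ̄`. -/
theorem stmt5 {p n q : ℕ} (hp : 1 ≤ p) (hn : 1 ≤ n)
    (Cov : Fin n → Mat p) (hCov : ∀ t, (Cov t).PosDef)
    (γ : Fin n → Vec p)
    (P : Fin q → Mat p) (hP : OrthPartition p q P)
    (hdec : ∀ (t : Fin n) (i j : Fin q), i ≠ j → P i * Cov t * P j = 0)
    (βinv : Vec p)
    (hβ : IsUMaxOn (fun β => (n : ℝ)⁻¹ * ∑ t, dVar (Cov t) (γ t) β)
      (invProj Cov γ P) βinv) :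
    (∀ t : Fin n, βinv = (invProj Cov γ P) *ᵥ γ t) ∧
    βinv = (invProj Cov γ P) *ᵥ ((n : ℝ)⁻¹ • ∑ t, γ t) := by
  classical
  set s : Finset (Fin q) := Finset.univ.filter (fun j => OptInv Cov γ (P j)) with hs
  have hQdef : invProj Cov γ P = ∑ j ∈ s, P j := by
    rw [invProj]
  set Q : Mat p := ∑ j ∈ s, P j with hQ
  rw [hQdef]
  -- each P j commutes with each Cov t
  have hcomm : ∀ (t : Fin n) (j : Fin q), P j * Cov t = Cov t * P j := by
    intro t j
    have h1 : P j * Cov t = P j * Cov t * P j := by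
      calc P j * Cov t = P j * Cov t * ∑ i, P i := by rw [hP.sum_one, mul_one]
        _ = ∑ i, P j * Cov t * P i := by rw [Finset.mul_sum]
        _ = P j * Cov t * P j := by
            rw [Finset.sum_eq_single j (fun i _ hne => hdec t j i (Ne.symm hne))
              (fun h => absurd (Finset.mem_univ j) h)]
    have h2 : Cov t * P j = P j * Cov t * P j := by
      calc Cov t * P j = (∑ i, P i) * Cov t * P j := by rw [hP.sum_one, one_mul]
        _ = ∑ i, P i * Cov t * P j := by rw [Finset.sum_mul, Finset.sum_mul]
        _ = P j * Cov t * P j := by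
            rw [Finset.sum_eq_single j (fun i _ hne => hdec t i j hne)
              (fun h => absurd (Finset.mem_univ j) h)]
    rw [h1, h2]
  have hQs : Qᵀ = Q := by
    rw [hQ, Matrix.transpose_sum]
    exact Finset.sum_congr rfl (fun j _ => hP.symm j)
  have hQi : Q * Q = Q := by
    rw [hQ, Finset.sum_mul_sum]
    rw [Finset.sum_congr rfl (fun j hj => Finset.sum_eq_single j
      (fun i _ hne => hP.orth j i (Ne.symm hne)) (fun h => absurd hj h))]
    exact Finset.sum_congr rfl (fun j _ => hP.idem j)
  have hQcomm : ∀ t, Q * Cov t = Cov t * Q := by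
    intro t
    rw [hQ, Finset.sum_mul, Finset.mul_sum]
    exact Finset.sum_congr rfl (fun j _ => hcomm t j)
  -- Q *ᵥ γ t is constant in t
  have hconst : ∀ t t' : Fin n, Q *ᵥ γ t = Q *ᵥ γ t' := by
    intro t t'
    rw [hQ, sum_mulVec', sum_mulVec']
    refine Finset.sum_congr rfl (fun j hj => ?_)
    obtain ⟨β₀, hβ₀⟩ : OptInv Cov γ (P j) := by
      simpa [hs] using hj
    have hPc : ∀ u : Fin n, P j * Cov u = Cov u * P j := fun u => hcomm u j
    have e1 : P j *ᵥ γ t = β₀ :=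
      uMax_unique (maxOn_proj (hCov t) (hP.symm j) (hP.idem j) (hPc t) (γ t)) (hβ₀ t)
    have e2 : P j *ᵥ γ t' = β₀ :=
      uMax_unique (maxOn_proj (hCov t') (hP.symm j) (hP.idem j) (hPc t') (γ t')) (hβ₀ t')
    rw [e1, e2]
  have hn' : (0:ℝ) < (n:ℝ)⁻¹ := by
    have : (0:ℝ) < (n:ℝ) := by exact_mod_cast hn
    positivity
  set t₀ : Fin n := ⟨0, hn⟩
  set c : Vec p := Q *ᵥ γ t₀ with hc
  have hcm : Q *ᵥ c = c := by rw [hc, mulVec_mulVec, hQi]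
  have hmain : βinv = c := by
    by_contra hne
    have hlt : ∀ t : Fin n, dVar (Cov t) (γ t) βinv < dVar (Cov t) (γ t) c := by
      intro t
      have hmax := maxOn_proj (hCov t) hQs hQi (hQcomm t) (γ t)
      have : c = Q *ᵥ γ t := by rw [hc, hconst t₀ t]
      rw [this]
      exact hmax.2 βinv hβ.1 (by rw [← this]; exact hne)
    have hsum : ∑ t, dVar (Cov t) (γ t) βinv < ∑ t, dVar (Cov t) (γ t) c :=
      Finset.sum_lt_sum_of_nonempty (Finset.univ_nonempty_iff.mpr ⟨t₀⟩)
        (fun t _ => hlt t)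
    have hflt : (n : ℝ)⁻¹ * ∑ t, dVar (Cov t) (γ t) βinv
        < (n : ℝ)⁻¹ * ∑ t, dVar (Cov t) (γ t) c :=
      mul_lt_mul_of_pos_left hsum hn'
    have := hβ.2 c hcm (fun hcc => hne hcc.symm)
    simp only at this
    linarith
  constructor
  · intro t
    rw [hmain, hc, hconst t₀ t]
  · have hnsum : Q *ᵥ ((n : ℝ)⁻¹ • ∑ t, γ t) = (n : ℝ)⁻¹ • ∑ t, Q *ᵥ γ t := by
      rw [mulVec_smul]
      congr 1
      induction (Finset.univ : Finset (Fin n)) using Finset.induction with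
      | empty => simp
      | insert _ _ h ih => simp [Finset.sum_insert h, mulVec_add, ih]
    rw [hnsum]
    have : ∑ t : Fin n, Q *ᵥ γ t = ∑ t : Fin n, c :=
      Finset.sum_congr rfl (fun t _ => by rw [hc, hconst t t₀])
    rw [this, Finset.sum_const, Finset.card_univ, Fintype.card_fin]
    rw [hmain]
    rw [← Nat.cast_smul_eq_nsmul ℝ n c, smul_smul,
      inv_mul_cancel₀ (by exact_mod_cast Nat.one_le_iff_ne_zero.mp hn), one_smul]
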